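/- (Derivative identity for the a priori covariance) Let A, C, W be real n×n matrices with W symmetric positive definite, and let σ₀ > 0. Suppose Σ : ℝ → ℝ^{n×n} is differentiable at σ₀, takes symmetric positive definite values, and satisfies, for all s in a neighborhood of σ₀, the parameterized Riccati equation Σ(s) = A Σ(s) Aᵀ − A Σ(s) Cᵀ (C Σ(s) Cᵀ + s²·I)⁻¹ C Σ(s) Aᵀ + W. Writing V := σ₀²·I, Σ := Σ(σ₀), P := Cᵀ(C Σ Cᵀ + V)⁻¹ C Σ Aᵀ, F := (C Σ Cᵀ + V)⁻¹ C Σ Aᵀ, and U := (Aᵀ − P)(A − Pᵀ) − I, the derivative Σ'(σ₀) satisfies tr( U · Σ'(σ₀) ) = −2σ₀ · tr( Fᵀ F ). -/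

import Mathlib

open Matrix

section
attribute [local instance] Matrix.linftyOpNormedAddCommGroup Matrix.linftyOpNormedRing
  Matrix.linftyOpNormedAlgebra

lemma hasDerivAt_matrix {n : ℕ} {S : ℝ → Matrix (Fin n) (Fin n) ℝ}
    {S' : Matrix (Fin n) (Fin n) ℝ} {x : ℝ}
    (h : ∀ i j, HasDerivAt (fun s => S s i j) (S' i j) x) :
    HasDerivAt S S' x := by
  have h2 : ∀ s, S s = ∑ i, ∑ j, (S s i j) • Matrix.single i j (1:ℝ) := by
    intro s
    conv_lhs => rw [Matrix.matrix_eq_sum_single (S s)]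
    simp [Matrix.smul_single, smul_eq_mul]
  have h3 : S' = ∑ i, ∑ j, (S' i j) • Matrix.single i j (1:ℝ) := by
    conv_lhs => rw [Matrix.matrix_eq_sum_single S']
    simp [Matrix.smul_single, smul_eq_mul]
  rw [funext h2, h3]
  exact HasDerivAt.fun_sum fun i _ => HasDerivAt.fun_sum fun j _ => (h i j).smul_const (Matrix.single i j (1:ℝ))

lemma riccati_key {n : ℕ}
    (A C W : Matrix (Fin n) (Fin n) ℝ) (σ₀ : ℝ)
    (S : ℝ → Matrix (Fin n) (Fin n) ℝ) (S' : Matrix (Fin n) (Fin n) ℝ)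
    (hderiv : ∀ i j, HasDerivAt (fun s => S s i j) (S' i j) σ₀)
    (hu : IsUnit (C * S σ₀ * Cᵀ + σ₀ ^ 2 • (1 : Matrix (Fin n) (Fin n) ℝ)))
    (hric : ∀ᶠ s in nhds σ₀, S s = A * S s * Aᵀ -
        A * S s * Cᵀ * (C * S s * Cᵀ + s ^ 2 • (1 : Matrix (Fin n) (Fin n) ℝ))⁻¹ *
          C * S s * Aᵀ + W) :
    S' = A * S' * Aᵀ -
      ((A * S' * Cᵀ * (C * S σ₀ * Cᵀ + σ₀ ^ 2 • (1 : Matrix (Fin n) (Fin n) ℝ))⁻¹ +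
          A * S σ₀ * Cᵀ *
            (-((C * S σ₀ * Cᵀ + σ₀ ^ 2 • (1 : Matrix (Fin n) (Fin n) ℝ))⁻¹ *
                (C * S' * Cᵀ + (2 * σ₀) • (1 : Matrix (Fin n) (Fin n) ℝ)) *
                (C * S σ₀ * Cᵀ + σ₀ ^ 2 • (1 : Matrix (Fin n) (Fin n) ℝ))⁻¹))) * C * S σ₀ +
        A * S σ₀ * Cᵀ * (C * S σ₀ * Cᵀ + σ₀ ^ 2 • (1 : Matrix (Fin n) (Fin n) ℝ))⁻¹ * C * S') *
        Aᵀ := by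
  have hS : HasDerivAt S S' σ₀ := hasDerivAt_matrix hderiv
  set G := (C * S σ₀ * Cᵀ + σ₀ ^ 2 • (1 : Matrix (Fin n) (Fin n) ℝ))⁻¹ with hG
  set N' := C * S' * Cᵀ + (2 * σ₀) • (1 : Matrix (Fin n) (Fin n) ℝ) with hN'
  have hN : HasDerivAt
      (fun s => C * S s * Cᵀ + s ^ 2 • (1 : Matrix (Fin n) (Fin n) ℝ)) N' σ₀ := by
    have h1 := ((hS.const_mul C).mul_const Cᵀ).add
      ((hasDerivAt_pow 2 σ₀).smul_const (1 : Matrix (Fin n) (Fin n) ℝ))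
    refine HasDerivAt.congr_deriv h1 ?_
    rw [hN']
    norm_num
  obtain ⟨u, hu'⟩ := hu
  have hInv : HasDerivAt
      (fun s => (C * S s * Cᵀ + s ^ 2 • (1 : Matrix (Fin n) (Fin n) ℝ))⁻¹)
      (-(G * N' * G)) σ₀ := by
    have hF := (hasFDerivAt_ringInverse (𝕜 := ℝ) u)
    rw [hu'] at hF
    have h2 := hF.comp_hasDerivAt σ₀ hN
    have h3 : ∀ s, Ring.inverse (C * S s * Cᵀ + s ^ 2 • (1 : Matrix (Fin n) (Fin n) ℝ)) =
        (C * S s * Cᵀ + s ^ 2 • (1 : Matrix (Fin n) (Fin n) ℝ))⁻¹ :=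
      fun s => (Matrix.nonsing_inv_eq_ringInverse _).symm
    have h4 : (↑u⁻¹ : Matrix (Fin n) (Fin n) ℝ) = G := by
      rw [Matrix.coe_units_inv, hu', hG]
    simp only [Function.comp_def, h3, ContinuousLinearMap.neg_apply,
      ContinuousLinearMap.mulLeftRight_apply, h4] at h2
    exact h2
  have hR : HasDerivAt
      (fun s => A * S s * Aᵀ -
        A * S s * Cᵀ * (C * S s * Cᵀ + s ^ 2 • (1 : Matrix (Fin n) (Fin n) ℝ))⁻¹ *
          C * S s * Aᵀ + W)
      (A * S' * Aᵀ -
        ((A * S' * Cᵀ * G + A * S σ₀ * Cᵀ * (-(G * N' * G))) * C * S σ₀ +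
          A * S σ₀ * Cᵀ * G * C * S') * Aᵀ) σ₀ := by
    exact (((hS.const_mul A).mul_const Aᵀ).sub
      ((((((hS.const_mul A).mul_const Cᵀ).mul hInv).mul_const C).mul hS).mul_const Aᵀ)).add_const W
  have hS2 := hR.congr_of_eventuallyEq hric
  exact hS.unique hS2
end

/-- Derivative identity for the a priori covariance: if `S(s)` solves the
privacy-parameterized Riccati equation near `σ₀` and is (entrywise)
differentiable at `σ₀` with derivative `S'`, then
`tr(U · S'(σ₀)) = −2σ₀ · tr(FᵀF)` where
`P = Cᵀ(C S Cᵀ + V)⁻¹ C S Aᵀ`, `F = (C S Cᵀ + V)⁻¹ C S Aᵀ`,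
`U = (Aᵀ − P)(A − Pᵀ) − I`, and `V = σ₀² I`. -/
theorem riccati_derivative_identity {n : ℕ}
    (A C W : Matrix (Fin n) (Fin n) ℝ) (hW : W.PosDef) (σ₀ : ℝ) (hσ₀ : 0 < σ₀)
    (S : ℝ → Matrix (Fin n) (Fin n) ℝ) (S' : Matrix (Fin n) (Fin n) ℝ)
    (hderiv : ∀ i j, HasDerivAt (fun s => S s i j) (S' i j) σ₀)
    (hpos : ∀ s, (S s).PosDef)
    (hric : ∀ᶠ s in nhds σ₀, S s = A * S s * Aᵀ -
        A * S s * Cᵀ * (C * S s * Cᵀ + s ^ 2 • (1 : Matrix (Fin n) (Fin n) ℝ))⁻¹ *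
          C * S s * Aᵀ + W) :
    (((Aᵀ - (Cᵀ * (C * S σ₀ * Cᵀ + σ₀ ^ 2 • (1 : Matrix (Fin n) (Fin n) ℝ))⁻¹ * C * S σ₀ * Aᵀ)) * (A - (Cᵀ * (C * S σ₀ * Cᵀ + σ₀ ^ 2 • (1 : Matrix (Fin n) (Fin n) ℝ))⁻¹ * C * S σ₀ * Aᵀ)ᵀ) - 1) * S').trace =
      -2 * σ₀ * ((((C * S σ₀ * Cᵀ + σ₀ ^ 2 • (1 : Matrix (Fin n) (Fin n) ℝ))⁻¹ * C * S σ₀ * Aᵀ)ᵀ * ((C * S σ₀ * Cᵀ + σ₀ ^ 2 • (1 : Matrix (Fin n) (Fin n) ℝ))⁻¹ * C * S σ₀ * Aᵀ)).trace) := by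
  have hps := hpos σ₀
  have hs : (S σ₀)ᵀ = S σ₀ := by
    have h := hps.isHermitian
    rwa [Matrix.IsHermitian, Matrix.conjTranspose_eq_transpose_of_trivial] at h
  have hCSC : (C * S σ₀ * Cᵀ).PosSemidef := by
    have h := hps.posSemidef.mul_mul_conjTranspose_same C
    rwa [Matrix.conjTranspose_eq_transpose_of_trivial] at h
  have hId : ((σ₀ ^ 2) • (1 : Matrix (Fin n) (Fin n) ℝ)).PosDef := by
    rw [Matrix.smul_one_eq_diagonal, Matrix.posDef_diagonal_iff]
    intro i; positivity
  have hN₀ : (C * S σ₀ * Cᵀ + σ₀ ^ 2 • (1 : Matrix (Fin n) (Fin n) ℝ)).PosDef :=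
    Matrix.PosDef.posSemidef_add hCSC hId
  have hNsym : (C * S σ₀ * Cᵀ + σ₀ ^ 2 • (1 : Matrix (Fin n) (Fin n) ℝ))ᵀ =
      (C * S σ₀ * Cᵀ + σ₀ ^ 2 • (1 : Matrix (Fin n) (Fin n) ℝ)) := by
    have h := hN₀.isHermitian
    rwa [Matrix.IsHermitian, Matrix.conjTranspose_eq_transpose_of_trivial] at h
  have hD := riccati_key A C W σ₀ S S' hderiv hN₀.isUnit hric
  set G := (C * S σ₀ * Cᵀ + σ₀ ^ 2 • (1 : Matrix (Fin n) (Fin n) ℝ))⁻¹ with hGdef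
  have hGsym : Gᵀ = G := by
    rw [hGdef, Matrix.transpose_nonsing_inv, hNsym]
  have hmain : S' = (A - A * S σ₀ * Cᵀ * G * C) * S' * (Aᵀ - Cᵀ * G * C * S σ₀ * Aᵀ)
      + (A * S σ₀ * Cᵀ * G) * ((2 * σ₀) • (1 : Matrix (Fin n) (Fin n) ℝ)) *
        (G * C * S σ₀ * Aᵀ) := by
    conv_lhs => rw [hD]
    generalize (2 * σ₀) • (1 : Matrix (Fin n) (Fin n) ℝ) = T
    noncomm_ring
  have hPt : (Cᵀ * G * C * S σ₀ * Aᵀ)ᵀ = A * S σ₀ * Cᵀ * G * C := by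
    simp [Matrix.transpose_mul, hs, hGsym, mul_assoc]
  have hFt : (G * C * S σ₀ * Aᵀ)ᵀ = A * S σ₀ * Cᵀ * G := by
    simp [Matrix.transpose_mul, hs, hGsym, mul_assoc]
  rw [hPt, hFt]
  have hT : (A * S σ₀ * Cᵀ * G) * ((2 * σ₀) • (1 : Matrix (Fin n) (Fin n) ℝ)) *
      (G * C * S σ₀ * Aᵀ) =
      (2 * σ₀) • ((A * S σ₀ * Cᵀ * G) * (G * C * S σ₀ * Aᵀ)) := by
    simp [mul_smul_comm, smul_mul_assoc]
  have etr : Matrix.trace S' =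
      Matrix.trace ((Aᵀ - Cᵀ * G * C * S σ₀ * Aᵀ) * ((A - A * S σ₀ * Cᵀ * G * C) * S'))
        + (2 * σ₀) * Matrix.trace ((A * S σ₀ * Cᵀ * G) * (G * C * S σ₀ * Aᵀ)) := by
    conv_lhs => rw [hmain]
    rw [hT, Matrix.trace_add, Matrix.trace_smul, smul_eq_mul]
    congr 1
    exact Matrix.trace_mul_comm _ _
  rw [Matrix.sub_mul, Matrix.one_mul, Matrix.trace_sub,
    show (Aᵀ - Cᵀ * G * C * S σ₀ * Aᵀ) * (A - A * S σ₀ * Cᵀ * G * C) * S' =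
      (Aᵀ - Cᵀ * G * C * S σ₀ * Aᵀ) * ((A - A * S σ₀ * Cᵀ * G * C) * S') from by
        rw [mul_assoc], etr]
  ring
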